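/- arXiv:1512.06210 — 3 statements merged into one kernel-verified Lean document; each statement's English description precedes it below -/
import Mathlib

section
/- Fix a real ρ ≠ 0. Suppose that for each σ ∈ {ρ, −ρ} there are given twice differentiable matrix functions F_+(·,σ), F_-(·,σ), F̄_+(·,σ), F̄_-(·,σ) : ℝ → M_m(ℂ) and matrices A(σ), B(σ) ∈ M_m(ℂ) such that: (i) all matrix Wronskians ⟨F̄_±(·,σ'), F_±(·,σ'')⟩ with σ', σ'' ∈ {ρ,−ρ} are constant in x; (ii) ⟨F̄_-(·,σ), F_-(·,σ)⟩ = 0_m, ⟨F̄_-(·,σ), F_-(·,−σ)⟩ = −2iσ·I_m, ⟨F̄_+(·,σ), F_+(·,σ)⟩ = 0_m, and ⟨F̄_+(·,σ), F_+(·,−σ)⟩ = 2iσ·I_m; (iii) F_+(x,σ) = F_-(x,−σ)A(σ) + F_-(x,σ)B(σ) and F̄_+(x,σ) = A(−σ)*·F̄_-(x,−σ) + B(−σ)*·F̄_-(x,σ) for all x ∈ ℝ. Then B(−ρ)*A(ρ) = A(−ρ)*B(ρ) and A(ρ)*A(ρ) = I_m + B(ρ)*B(ρ). -/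
open Matrix
open scoped Matrix.Norms.L2Operator

private lemma wron_expand {R : Type*} [Ring R] (P Q U V n1 n1' n2 n2' m1 m1' m2 m2' : R) :
    (P * n1' + Q * n2') * (m1 * U + m2 * V) - (P * n1 + Q * n2) * (m1' * U + m2' * V)
    = P * (n1' * m1 - n1 * m1') * U + P * (n1' * m2 - n1 * m2') * V
      + Q * (n2' * m1 - n2 * m1') * U + Q * (n2' * m2 - n2 * m2') * V := by
  noncomm_ring

/-- Under the standard Wronskian properties of the Jost solutions
`F_±(·,σ)`, `F̄_±(·,σ)` (for `σ ∈ {ρ, -ρ}`, `ρ` real nonzero) and the expansions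
`F_+(x,σ) = F_-(x,-σ)A(σ) + F_-(x,σ)B(σ)`,
`F̄_+(x,σ) = A(-σ)* F̄_-(x,-σ) + B(-σ)* F̄_-(x,σ)`,
one has `B(-ρ)* A(ρ) = A(-ρ)* B(ρ)` and `A(ρ)* A(ρ) = I + B(ρ)* B(ρ)`. -/
theorem scattering_coefficients_unitarity_relations
    (m : ℕ) (ρ : ℝ) (hρ : ρ ≠ 0)
    (Fp Fm Fbp Fbm Fp' Fm' Fbp' Fbm' : ℝ → ℝ → Matrix (Fin m) (Fin m) ℂ)
    (A B : ℝ → Matrix (Fin m) (Fin m) ℂ)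
    -- twice differentiability: the given functions have the given first derivatives,
    -- which are themselves differentiable
    (hdFp : ∀ σ ∈ ({ρ, -ρ} : Set ℝ), ∀ x, HasDerivAt (Fp σ) (Fp' σ x) x)
    (hdFm : ∀ σ ∈ ({ρ, -ρ} : Set ℝ), ∀ x, HasDerivAt (Fm σ) (Fm' σ x) x)
    (hdFbp : ∀ σ ∈ ({ρ, -ρ} : Set ℝ), ∀ x, HasDerivAt (Fbp σ) (Fbp' σ x) x)
    (hdFbm : ∀ σ ∈ ({ρ, -ρ} : Set ℝ), ∀ x, HasDerivAt (Fbm σ) (Fbm' σ x) x)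
    (hd2Fp : ∀ σ ∈ ({ρ, -ρ} : Set ℝ), Differentiable ℝ (Fp' σ))
    (hd2Fm : ∀ σ ∈ ({ρ, -ρ} : Set ℝ), Differentiable ℝ (Fm' σ))
    (hd2Fbp : ∀ σ ∈ ({ρ, -ρ} : Set ℝ), Differentiable ℝ (Fbp' σ))
    (hd2Fbm : ∀ σ ∈ ({ρ, -ρ} : Set ℝ), Differentiable ℝ (Fbm' σ))
    -- (i) all Wronskians ⟨F̄_±(·,σ'), F_±(·,σ'')⟩ are constant in x
    (hconst : ∀ σ' ∈ ({ρ, -ρ} : Set ℝ), ∀ σ'' ∈ ({ρ, -ρ} : Set ℝ), ∀ x y : ℝ,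
      (Fbp' σ' x * Fp σ'' x - Fbp σ' x * Fp' σ'' x
        = Fbp' σ' y * Fp σ'' y - Fbp σ' y * Fp' σ'' y) ∧
      (Fbp' σ' x * Fm σ'' x - Fbp σ' x * Fm' σ'' x
        = Fbp' σ' y * Fm σ'' y - Fbp σ' y * Fm' σ'' y) ∧
      (Fbm' σ' x * Fp σ'' x - Fbm σ' x * Fp' σ'' x
        = Fbm' σ' y * Fp σ'' y - Fbm σ' y * Fp' σ'' y) ∧
      (Fbm' σ' x * Fm σ'' x - Fbm σ' x * Fm' σ'' x
        = Fbm' σ' y * Fm σ'' y - Fbm σ' y * Fm' σ'' y))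
    -- (ii) the normalization of the Wronskians
    (hWmm : ∀ σ ∈ ({ρ, -ρ} : Set ℝ), ∀ x : ℝ,
      Fbm' σ x * Fm σ x - Fbm σ x * Fm' σ x = 0)
    (hWmm' : ∀ σ ∈ ({ρ, -ρ} : Set ℝ), ∀ x : ℝ,
      Fbm' σ x * Fm (-σ) x - Fbm σ x * Fm' (-σ) x = (-(2 * Complex.I * (σ : ℂ))) • (1 : Matrix (Fin m) (Fin m) ℂ))
    (hWpp : ∀ σ ∈ ({ρ, -ρ} : Set ℝ), ∀ x : ℝ,
      Fbp' σ x * Fp σ x - Fbp σ x * Fp' σ x = 0)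
    (hWpp' : ∀ σ ∈ ({ρ, -ρ} : Set ℝ), ∀ x : ℝ,
      Fbp' σ x * Fp (-σ) x - Fbp σ x * Fp' (-σ) x = (2 * Complex.I * (σ : ℂ)) • (1 : Matrix (Fin m) (Fin m) ℂ))
    -- (iii) the expansions
    (hexp : ∀ σ ∈ ({ρ, -ρ} : Set ℝ), ∀ x : ℝ,
      Fp σ x = Fm (-σ) x * A σ + Fm σ x * B σ)
    (hexpbar : ∀ σ ∈ ({ρ, -ρ} : Set ℝ), ∀ x : ℝ,
      Fbp σ x = (A (-σ))ᴴ * Fbm (-σ) x + (B (-σ))ᴴ * Fbm σ x) :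
    (B (-ρ))ᴴ * A ρ = (A (-ρ))ᴴ * B ρ ∧
      (A ρ)ᴴ * A ρ = 1 + (B ρ)ᴴ * B ρ := by

  have h1 : ρ ∈ ({ρ, -ρ} : Set ℝ) := Set.mem_insert _ _
  have h2 : -ρ ∈ ({ρ, -ρ} : Set ℝ) := Set.mem_insert_of_mem _ rfl
  set c : ℂ := 2 * Complex.I * (ρ : ℂ) with hc
  have hcne : c ≠ 0 := by
    simp [hc, Complex.I_ne_zero, Complex.ofReal_ne_zero, hρ]
  -- derivatives of the expansions
  have hFp'ρ : ∀ x, Fp' ρ x = Fm' (-ρ) x * A ρ + Fm' ρ x * B ρ := by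
    intro x
    have hder : HasDerivAt (fun y => Fm (-ρ) y * A ρ + Fm ρ y * B ρ)
        (Fm' (-ρ) x * A ρ + Fm' ρ x * B ρ) x :=
      ((hdFm (-ρ) h2 x).mul_const (A ρ)).add ((hdFm ρ h1 x).mul_const (B ρ))
    have heq : Fp ρ = fun y => Fm (-ρ) y * A ρ + Fm ρ y * B ρ := funext (hexp ρ h1)
    exact (hdFp ρ h1 x).unique (heq ▸ hder)
  have hFbp'ρ : ∀ x, Fbp' ρ x = (A (-ρ))ᴴ * Fbm' (-ρ) x + (B (-ρ))ᴴ * Fbm' ρ x := by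
    intro x
    have hder : HasDerivAt (fun y => (A (-ρ))ᴴ * Fbm (-ρ) y + (B (-ρ))ᴴ * Fbm ρ y)
        ((A (-ρ))ᴴ * Fbm' (-ρ) x + (B (-ρ))ᴴ * Fbm' ρ x) x :=
      ((hdFbm (-ρ) h2 x).const_mul _).add ((hdFbm ρ h1 x).const_mul _)
    have heq : Fbp ρ = fun y => (A (-ρ))ᴴ * Fbm (-ρ) y + (B (-ρ))ᴴ * Fbm ρ y :=
      funext (hexpbar ρ h1)
    exact (hdFbp ρ h1 x).unique (heq ▸ hder)
  have hFbp'neg : ∀ x, Fbp' (-ρ) x = (A ρ)ᴴ * Fbm' ρ x + (B ρ)ᴴ * Fbm' (-ρ) x := by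
    intro x
    have hder : HasDerivAt (fun y => (A ρ)ᴴ * Fbm ρ y + (B ρ)ᴴ * Fbm (-ρ) y)
        ((A ρ)ᴴ * Fbm' ρ x + (B ρ)ᴴ * Fbm' (-ρ) x) x :=
      ((hdFbm ρ h1 x).const_mul _).add ((hdFbm (-ρ) h2 x).const_mul _)
    have heq : Fbp (-ρ) = fun y => (A ρ)ᴴ * Fbm ρ y + (B ρ)ᴴ * Fbm (-ρ) y := by
      funext y
      simpa [neg_neg] using hexpbar (-ρ) h2 y
    exact (hdFbp (-ρ) h2 x).unique (heq ▸ hder)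
  -- Wronskian values at 0
  have wmmρ := hWmm ρ h1 0
  have wmmn := hWmm (-ρ) h2 0
  have wρn := hWmm' ρ h1 0
  have wnρ : Fbm' (-ρ) 0 * Fm ρ 0 - Fbm (-ρ) 0 * Fm' ρ 0
      = c • (1 : Matrix (Fin m) (Fin m) ℂ) := by
    have := hWmm' (-ρ) h2 0
    simpa [neg_neg, hc, neg_mul, mul_neg] using this
  -- First relation
  have key1 := hWpp ρ h1 0
  rw [hFbp'ρ 0, hFp'ρ 0, hexpbar ρ h1 0, hexp ρ h1 0, wron_expand] at key1
  rw [wmmn, wnρ, wρn, wmmρ] at key1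
  have e1 : c • ((A (-ρ))ᴴ * B ρ) - c • ((B (-ρ))ᴴ * A ρ) = 0 := by
    have : (A (-ρ))ᴴ * (c • (1 : Matrix (Fin m) (Fin m) ℂ)) * B ρ
        + (B (-ρ))ᴴ * ((-c) • (1 : Matrix (Fin m) (Fin m) ℂ)) * A ρ = 0 := by
      simpa [hc] using key1
    simpa [mul_smul_comm, smul_mul_assoc, neg_smul, sub_eq_add_neg, mul_one,
      Matrix.mul_one] using this
  have rel1 : (B (-ρ))ᴴ * A ρ = (A (-ρ))ᴴ * B ρ := by
    have := sub_eq_zero.mp (by simpa [smul_sub] using e1)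
    have := (smul_right_injective (Matrix (Fin m) (Fin m) ℂ) hcne) this
    exact this.symm
  -- Second relation
  have key2 := hWpp' (-ρ) h2 0
  rw [show (-(-ρ) : ℝ) = ρ from neg_neg ρ] at key2
  rw [hFbp'neg 0, hFp'ρ 0, hexp ρ h1 0] at key2
  rw [show Fbp (-ρ) 0 = (A ρ)ᴴ * Fbm ρ 0 + (B ρ)ᴴ * Fbm (-ρ) 0 by
    simpa [neg_neg] using hexpbar (-ρ) h2 0] at key2
  rw [wron_expand, wρn, wmmρ, wmmn, wnρ] at key2
  have e2 : -(c • ((A ρ)ᴴ * A ρ)) + c • ((B ρ)ᴴ * B ρ) = -(c • 1) := by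
    have : (A ρ)ᴴ * ((-c) • (1 : Matrix (Fin m) (Fin m) ℂ)) * A ρ
        + (B ρ)ᴴ * (c • (1 : Matrix (Fin m) (Fin m) ℂ)) * B ρ
        = (2 * Complex.I * ((-ρ : ℝ) : ℂ)) • (1 : Matrix (Fin m) (Fin m) ℂ) := by
      simpa [hc] using key2
    have h' := this
    rw [show (2 * Complex.I * ((-ρ : ℝ) : ℂ)) = -c by push_cast [hc]; ring] at h'
    simpa [mul_smul_comm, smul_mul_assoc, neg_smul, mul_one, Matrix.mul_one] using h'
  have rel2 : (A ρ)ᴴ * A ρ = 1 + (B ρ)ᴴ * B ρ := by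
    have hsub : c • ((A ρ)ᴴ * A ρ) = c • ((1 : Matrix (Fin m) (Fin m) ℂ) + (B ρ)ᴴ * B ρ) := by
      rw [smul_add]
      linear_combination (norm := abel) -e2
    exact smul_right_injective (Matrix (Fin m) (Fin m) ℂ) hcne hsub
  exact ⟨rel1, rel2⟩
end

section
/- Fix a real ρ ≠ 0. Suppose that for each σ ∈ {ρ, −ρ} there are given twice differentiable matrix functions F_+(·,σ), F_-(·,σ), F̄_+(·,σ), F̄_-(·,σ) : ℝ → M_m(ℂ) and matrices A(σ), B(σ), C(σ), D(σ) ∈ M_m(ℂ) such that: (i) all matrix Wronskians ⟨F̄_±(·,σ'), F_±(·,σ'')⟩ with σ', σ'' ∈ {ρ,−ρ} are constant in x; (ii) ⟨F̄_-(·,σ), F_-(·,σ)⟩ = 0_m, ⟨F̄_-(·,σ), F_-(·,−σ)⟩ = −2iσ·I_m, ⟨F̄_+(·,σ), F_+(·,σ)⟩ = 0_m, and ⟨F̄_+(·,σ), F_+(·,−σ)⟩ = 2iσ·I_m; (iii) F_+(x,σ) = F_-(x,−σ)A(σ) + F_-(x,σ)B(σ), F̄_+(x,σ) = A(−σ)*·F̄_-(x,−σ)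 + B(−σ)*·F̄_-(x,σ), and F_-(x,σ) = F_+(x,σ)C(σ) + F_+(x,−σ)D(σ) for all x ∈ ℝ. Then A(ρ) = D(−ρ)* and B(ρ) = −C(ρ)*. -/
open Matrix
open scoped Matrix.Norms.L2Operator

/-- Under the standard Wronskian properties of the Jost solutions
`F_±(·,σ)`, `F̄_±(·,σ)` (for `σ ∈ {ρ, -ρ}`, `ρ` real nonzero) and the expansions
`F_+(x,σ) = F_-(x,-σ)A(σ) + F_-(x,σ)B(σ)`,
`F̄_+(x,σ) = A(-σ)* F̄_-(x,-σ) + B(-σ)* F̄_-(x,σ)`,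
`F_-(x,σ) = F_+(x,σ)C(σ) + F_+(x,-σ)D(σ)`,
one has `A(ρ) = D(-ρ)*` and `B(ρ) = -C(ρ)*`. -/
theorem scattering_coefficients_symmetry_relations
    (m : ℕ) (ρ : ℝ) (hρ : ρ ≠ 0)
    (Fp Fm Fbp Fbm Fp' Fm' Fbp' Fbm' : ℝ → ℝ → Matrix (Fin m) (Fin m) ℂ)
    (A B C D : ℝ → Matrix (Fin m) (Fin m) ℂ)
    -- twice differentiability: the given functions have the given first derivatives,
    -- which are themselves differentiable
    (hdFp : ∀ σ ∈ ({ρ, -ρ} : Set ℝ), ∀ x, HasDerivAt (Fp σ) (Fp' σ x) x)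
    (hdFm : ∀ σ ∈ ({ρ, -ρ} : Set ℝ), ∀ x, HasDerivAt (Fm σ) (Fm' σ x) x)
    (hdFbp : ∀ σ ∈ ({ρ, -ρ} : Set ℝ), ∀ x, HasDerivAt (Fbp σ) (Fbp' σ x) x)
    (hdFbm : ∀ σ ∈ ({ρ, -ρ} : Set ℝ), ∀ x, HasDerivAt (Fbm σ) (Fbm' σ x) x)
    (hd2Fp : ∀ σ ∈ ({ρ, -ρ} : Set ℝ), Differentiable ℝ (Fp' σ))
    (hd2Fm : ∀ σ ∈ ({ρ, -ρ} : Set ℝ), Differentiable ℝ (Fm' σ))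
    (hd2Fbp : ∀ σ ∈ ({ρ, -ρ} : Set ℝ), Differentiable ℝ (Fbp' σ))
    (hd2Fbm : ∀ σ ∈ ({ρ, -ρ} : Set ℝ), Differentiable ℝ (Fbm' σ))
    -- (i) all Wronskians ⟨F̄_±(·,σ'), F_±(·,σ'')⟩ are constant in x
    (hconst : ∀ σ' ∈ ({ρ, -ρ} : Set ℝ), ∀ σ'' ∈ ({ρ, -ρ} : Set ℝ), ∀ x y : ℝ,
      (Fbp' σ' x * Fp σ'' x - Fbp σ' x * Fp' σ'' x
        = Fbp' σ' y * Fp σ'' y - Fbp σ' y * Fp' σ'' y) ∧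
      (Fbp' σ' x * Fm σ'' x - Fbp σ' x * Fm' σ'' x
        = Fbp' σ' y * Fm σ'' y - Fbp σ' y * Fm' σ'' y) ∧
      (Fbm' σ' x * Fp σ'' x - Fbm σ' x * Fp' σ'' x
        = Fbm' σ' y * Fp σ'' y - Fbm σ' y * Fp' σ'' y) ∧
      (Fbm' σ' x * Fm σ'' x - Fbm σ' x * Fm' σ'' x
        = Fbm' σ' y * Fm σ'' y - Fbm σ' y * Fm' σ'' y))
    -- (ii) the normalization of the Wronskians
    (hWmm : ∀ σ ∈ ({ρ, -ρ} : Set ℝ), ∀ x : ℝ,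
      Fbm' σ x * Fm σ x - Fbm σ x * Fm' σ x = 0)
    (hWmm' : ∀ σ ∈ ({ρ, -ρ} : Set ℝ), ∀ x : ℝ,
      Fbm' σ x * Fm (-σ) x - Fbm σ x * Fm' (-σ) x = (-(2 * Complex.I * (σ : ℂ))) • (1 : Matrix (Fin m) (Fin m) ℂ))
    (hWpp : ∀ σ ∈ ({ρ, -ρ} : Set ℝ), ∀ x : ℝ,
      Fbp' σ x * Fp σ x - Fbp σ x * Fp' σ x = 0)
    (hWpp' : ∀ σ ∈ ({ρ, -ρ} : Set ℝ), ∀ x : ℝ,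
      Fbp' σ x * Fp (-σ) x - Fbp σ x * Fp' (-σ) x = (2 * Complex.I * (σ : ℂ)) • (1 : Matrix (Fin m) (Fin m) ℂ))
    -- (iii) the expansions
    (hexp : ∀ σ ∈ ({ρ, -ρ} : Set ℝ), ∀ x : ℝ,
      Fp σ x = Fm (-σ) x * A σ + Fm σ x * B σ)
    (hexpbar : ∀ σ ∈ ({ρ, -ρ} : Set ℝ), ∀ x : ℝ,
      Fbp σ x = (A (-σ))ᴴ * Fbm (-σ) x + (B (-σ))ᴴ * Fbm σ x)
    (hexpm : ∀ σ ∈ ({ρ, -ρ} : Set ℝ), ∀ x : ℝ,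
      Fm σ x = Fp σ x * C σ + Fp (-σ) x * D σ) :
    A ρ = (D (-ρ))ᴴ ∧ B ρ = -(C ρ)ᴴ := by

  have hp : ρ ∈ ({ρ, -ρ} : Set ℝ) := Set.mem_insert _ _
  have hm : (-ρ) ∈ ({ρ, -ρ} : Set ℝ) := Set.mem_insert_of_mem _ rfl
  -- expansions with -(-ρ) simplified
  have hexpm_m : ∀ x, Fm (-ρ) x = Fp (-ρ) x * C (-ρ) + Fp ρ x * D (-ρ) := fun x => by
    have h := hexpm (-ρ) hm x; rwa [neg_neg] at h
  have hexpm_p : ∀ x, Fm ρ x = Fp ρ x * C ρ + Fp (-ρ) x * D ρ := hexpm ρ hp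
  have hexpbar_m : ∀ x, Fbp (-ρ) x = (A ρ)ᴴ * Fbm ρ x + (B ρ)ᴴ * Fbm (-ρ) x := fun x => by
    have h := hexpbar (-ρ) hm x; rwa [neg_neg] at h
  -- derivatives of the expansions
  have hFm'm : ∀ x, Fm' (-ρ) x = Fp' (-ρ) x * C (-ρ) + Fp' ρ x * D (-ρ) := fun x => by
    have h1 : HasDerivAt (Fm (-ρ)) (Fm' (-ρ) x) x := hdFm _ hm x
    have h2 : HasDerivAt (fun y => Fp (-ρ) y * C (-ρ) + Fp ρ y * D (-ρ))
        (Fp' (-ρ) x * C (-ρ) + Fp' ρ x * D (-ρ)) x :=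
      ((hdFp _ hm x).mul_const _).fun_add ((hdFp _ hp x).mul_const _)
    have heq : Fm (-ρ) = fun y => Fp (-ρ) y * C (-ρ) + Fp ρ y * D (-ρ) := funext hexpm_m
    rw [heq] at h1
    exact h1.unique h2
  have hFm'p : ∀ x, Fm' ρ x = Fp' ρ x * C ρ + Fp' (-ρ) x * D ρ := fun x => by
    have h1 : HasDerivAt (Fm ρ) (Fm' ρ x) x := hdFm _ hp x
    have h2 : HasDerivAt (fun y => Fp ρ y * C ρ + Fp (-ρ) y * D ρ)
        (Fp' ρ x * C ρ + Fp' (-ρ) x * D ρ) x :=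
      ((hdFp _ hp x).mul_const _).fun_add ((hdFp _ hm x).mul_const _)
    have heq : Fm ρ = fun y => Fp ρ y * C ρ + Fp (-ρ) y * D ρ := funext hexpm_p
    rw [heq] at h1
    exact h1.unique h2
  have hFbp'm : ∀ x, Fbp' (-ρ) x = (A ρ)ᴴ * Fbm' ρ x + (B ρ)ᴴ * Fbm' (-ρ) x := fun x => by
    have h1 : HasDerivAt (Fbp (-ρ)) (Fbp' (-ρ) x) x := hdFbp _ hm x
    have h2 : HasDerivAt (fun y => (A ρ)ᴴ * Fbm ρ y + (B ρ)ᴴ * Fbm (-ρ) y)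
        ((A ρ)ᴴ * Fbm' ρ x + (B ρ)ᴴ * Fbm' (-ρ) x) x :=
      ((hdFbm _ hp x).const_mul _).fun_add ((hdFbm _ hm x).const_mul _)
    have heq : Fbp (-ρ) = fun y => (A ρ)ᴴ * Fbm ρ y + (B ρ)ᴴ * Fbm (-ρ) y := funext hexpbar_m
    rw [heq] at h1
    exact h1.unique h2
  -- Wronskian values needed, at x = 0
  have e0 := hWpp (-ρ) hm 0
  have e1 := hWpp' (-ρ) hm 0
  rw [neg_neg] at e1
  have e1' : Fbp' (-ρ) 0 * Fp ρ 0 - Fbp (-ρ) 0 * Fp' ρ 0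
      = (-(2 * Complex.I * (ρ : ℂ))) • (1 : Matrix (Fin m) (Fin m) ℂ) := by
    rw [e1]; push_cast; ring_nf
  have e2 := hWmm' ρ hp 0
  have e3 := hWmm (-ρ) hm 0
  have e3' := hWmm ρ hp 0
  have e4 := hWmm' (-ρ) hm 0
  rw [neg_neg] at e4
  have e4' : Fbm' (-ρ) 0 * Fm ρ 0 - Fbm (-ρ) 0 * Fm' ρ 0
      = (2 * Complex.I * (ρ : ℂ)) • (1 : Matrix (Fin m) (Fin m) ℂ) := by
    rw [e4]; push_cast; ring_nf
  -- the two computations of W1 := ⟨F̄₊(-ρ), F₋(-ρ)⟩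
  have W1a : Fbp' (-ρ) 0 * Fm (-ρ) 0 - Fbp (-ρ) 0 * Fm' (-ρ) 0
      = (-(2 * Complex.I * (ρ : ℂ))) • D (-ρ) := by
    rw [hexpm_m 0, hFm'm 0]
    have key : Fbp' (-ρ) 0 * (Fp (-ρ) 0 * C (-ρ) + Fp ρ 0 * D (-ρ))
        - Fbp (-ρ) 0 * (Fp' (-ρ) 0 * C (-ρ) + Fp' ρ 0 * D (-ρ))
        = (Fbp' (-ρ) 0 * Fp (-ρ) 0 - Fbp (-ρ) 0 * Fp' (-ρ) 0) * C (-ρ)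
          + (Fbp' (-ρ) 0 * Fp ρ 0 - Fbp (-ρ) 0 * Fp' ρ 0) * D (-ρ) := by
      noncomm_ring
    rw [key, e0, e1', zero_mul, zero_add, smul_mul_assoc, one_mul]
  have W1b : Fbp' (-ρ) 0 * Fm (-ρ) 0 - Fbp (-ρ) 0 * Fm' (-ρ) 0
      = (-(2 * Complex.I * (ρ : ℂ))) • (A ρ)ᴴ := by
    rw [hexpbar_m 0, hFbp'm 0]
    have key : ((A ρ)ᴴ * Fbm' ρ 0 + (B ρ)ᴴ * Fbm' (-ρ) 0) * Fm (-ρ) 0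
        - ((A ρ)ᴴ * Fbm ρ 0 + (B ρ)ᴴ * Fbm (-ρ) 0) * Fm' (-ρ) 0
        = (A ρ)ᴴ * (Fbm' ρ 0 * Fm (-ρ) 0 - Fbm ρ 0 * Fm' (-ρ) 0)
          + (B ρ)ᴴ * (Fbm' (-ρ) 0 * Fm (-ρ) 0 - Fbm (-ρ) 0 * Fm' (-ρ) 0) := by
      noncomm_ring
    rw [key, e2, e3, mul_zero, add_zero, mul_smul_comm, mul_one]
  -- the two computations of W2 := ⟨F̄₊(-ρ), F₋(ρ)⟩
  have W2a : Fbp' (-ρ) 0 * Fm ρ 0 - Fbp (-ρ) 0 * Fm' ρ 0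
      = (-(2 * Complex.I * (ρ : ℂ))) • C ρ := by
    rw [hexpm_p 0, hFm'p 0]
    have key : Fbp' (-ρ) 0 * (Fp ρ 0 * C ρ + Fp (-ρ) 0 * D ρ)
        - Fbp (-ρ) 0 * (Fp' ρ 0 * C ρ + Fp' (-ρ) 0 * D ρ)
        = (Fbp' (-ρ) 0 * Fp ρ 0 - Fbp (-ρ) 0 * Fp' ρ 0) * C ρ
          + (Fbp' (-ρ) 0 * Fp (-ρ) 0 - Fbp (-ρ) 0 * Fp' (-ρ) 0) * D ρ := by
      noncomm_ring
    rw [key, e0, e1', zero_mul, add_zero, smul_mul_assoc, one_mul]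
  have W2b : Fbp' (-ρ) 0 * Fm ρ 0 - Fbp (-ρ) 0 * Fm' ρ 0
      = (2 * Complex.I * (ρ : ℂ)) • (B ρ)ᴴ := by
    rw [hexpbar_m 0, hFbp'm 0]
    have key : ((A ρ)ᴴ * Fbm' ρ 0 + (B ρ)ᴴ * Fbm' (-ρ) 0) * Fm ρ 0
        - ((A ρ)ᴴ * Fbm ρ 0 + (B ρ)ᴴ * Fbm (-ρ) 0) * Fm' ρ 0
        = (A ρ)ᴴ * (Fbm' ρ 0 * Fm ρ 0 - Fbm ρ 0 * Fm' ρ 0)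
          + (B ρ)ᴴ * (Fbm' (-ρ) 0 * Fm ρ 0 - Fbm (-ρ) 0 * Fm' ρ 0) := by
      noncomm_ring
    rw [key, e3', e4', mul_zero, zero_add, mul_smul_comm, mul_one]
  have hc : (2 * Complex.I * (ρ : ℂ)) ≠ 0 := by
    simp [Complex.I_ne_zero, hρ, Complex.ofReal_ne_zero]
  constructor
  · have h := W1a.symm.trans W1b
    have h2 : D (-ρ) = (A ρ)ᴴ := by
      have := smul_right_injective (Matrix (Fin m) (Fin m) ℂ) (neg_ne_zero.mpr hc) h
      exact this
    rw [h2, conjTranspose_conjTranspose]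
  · have h := W2a.symm.trans W2b
    have h' : (2 * Complex.I * (ρ : ℂ)) • (-(C ρ)) = (2 * Complex.I * (ρ : ℂ)) • (B ρ)ᴴ := by
      rw [smul_neg, ← neg_smul]; exact h
    have h2 : -(C ρ) = (B ρ)ᴴ := smul_right_injective (Matrix (Fin m) (Fin m) ℂ) hc h'
    have h3 : (B ρ)ᴴᴴ = (-(C ρ))ᴴ := by rw [h2]
    rw [conjTranspose_conjTranspose, conjTranspose_neg] at h3
    exact h3
end

section
/- Let U be a matrix function with values in M_m(ℂ), analytic on {Im ρ > 0} and continuous on {Im ρ ≥ 0}∖{0}, such that: (i) det U(ρ) ≠ 0 for all ρ with Im ρ ≥ 0, ρ ≠ 0; (ii) U(ρ)*·U(ρ) = I_m for all real ρ ≠ 0; (iii) ‖U(ρ) − I_m‖ = O(|ρ|⁻¹) and ‖U(ρ)⁻¹ − I_m‖ = O(|ρ|⁻¹) as |ρ| → ∞ in the closed upper half-plane; (iv) U(ρ) and U(ρ)⁻¹ are bounded in a punctured neighborhood of ρ = 0 intersected with the closed upper half-plane. Then U(ρ) = I_m for all ρ with Im ρ ≥ 0, ρ ≠ 0. -/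
open Matrix
open scoped Matrix.Norms.L2Operator

open Complex Set Metric Filter
open scoped Topology

lemma aux_slit (z : ℂ) (him : 0 ≤ z.im) (hz : z ≠ 0) :
    z / (z + Complex.I) ∈ Complex.slitPlane := by
  have hw : z + Complex.I ≠ 0 := by
    intro h
    have : (z + Complex.I).im = 0 := by rw [h]; simp
    simp [Complex.add_im] at this
    linarith
  have hN : 0 < Complex.normSq (z + Complex.I) := Complex.normSq_pos.2 hw
  rw [Complex.mem_slitPlane_iff]
  have hre : (z / (z + Complex.I)).re
      = (z.re * z.re + z.im * (z.im + 1)) / Complex.normSq (z + Complex.I) := by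
    rw [Complex.div_re]; simp [Complex.add_re, Complex.add_im]; ring
  have him' : (z / (z + Complex.I)).im
      = (- z.re) / Complex.normSq (z + Complex.I) := by
    rw [Complex.div_im]; simp [Complex.add_re, Complex.add_im]; ring
  rcases eq_or_ne z.re 0 with h0 | h0
  · left
    have hzim : z.im ≠ 0 := fun h => hz (Complex.ext h0 h)
    have : 0 < z.im := lt_of_le_of_ne him (Ne.symm hzim)
    rw [hre, h0]
    positivity
  · right
    rw [him']
    exact div_ne_zero (by simpa using h0) (ne_of_gt hN)

lemma aux_addI_ne (z : ℂ) (him : 0 ≤ z.im) : z + Complex.I ≠ 0 := by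
  intro h
  have : (z + Complex.I).im = 0 := by rw [h]; simp
  simp [Complex.add_im] at this
  linarith

lemma aux_norm_le (z : ℂ) (him : 0 ≤ z.im) : ‖z‖ ≤ ‖z + Complex.I‖ := by
  have h1 : Complex.normSq z ≤ Complex.normSq (z + Complex.I) := by
    simp only [Complex.normSq_apply, Complex.add_re, Complex.add_im, Complex.I_re, Complex.I_im]
    nlinarith
  have := Real.sqrt_le_sqrt h1
  simpa [Complex.norm_def] using this

lemma aux_im_nonneg (f : ℂ → ℂ)
    (hd : DifferentiableOn ℂ f {z : ℂ | 0 < z.im})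
    (hc : ContinuousOn f {z : ℂ | 0 ≤ z.im ∧ z ≠ 0})
    (M : ℝ) (hM : ∀ z : ℂ, 0 ≤ z.im → z ≠ 0 → ‖f z‖ ≤ M)
    (hreal : ∀ t : ℝ, t ≠ 0 → (f (t : ℂ)).im = 0)
    (K r : ℝ) (hK : 0 ≤ K)
    (hdecay : ∀ z : ℂ, 0 ≤ z.im → z ≠ 0 → r ≤ ‖z‖ → ‖f z‖ ≤ K / ‖z‖) :
    ∀ z : ℂ, 0 < z.im → 0 ≤ (f z).im := by
  intro z₀ hz₀
  set R₀ : ℝ := max r (max 1 (‖z₀‖ + 1)) with hR₀def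
  have hR₀1 : (1:ℝ) ≤ R₀ := le_trans (le_max_left 1 _) (le_max_right r _)
  have hz₀0 : z₀ ≠ 0 := fun h => by rw [h] at hz₀; simp at hz₀
  set t₀ : ℝ := ‖z₀ / (z₀ + Complex.I)‖ with ht₀def
  have ht₀pos : 0 < t₀ := by
    apply norm_pos_iff.2
    exact div_ne_zero hz₀0 (aux_addI_ne z₀ hz₀.le)
  have ht₀le : t₀ ≤ 1 := by
    rw [ht₀def, norm_div]
    exact div_le_one_of_le₀ (aux_norm_le z₀ hz₀.le) (norm_nonneg _)
  -- main maximum-modulus estimate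
  have claim1 : ∀ ε : ℝ, 0 < ε → ∀ R : ℝ, R₀ ≤ R →
      Real.exp (-(f z₀).im + ε * Real.log t₀) ≤ Real.exp (K / R) := by
    intro ε hε R hR
    have hR1 : (1:ℝ) ≤ R := le_trans hR₀1 hR
    have hRpos : (0:ℝ) < R := by linarith
    set D : Set ℂ := {z : ℂ | 0 < z.im} ∩ Metric.ball (0:ℂ) R with hDdef
    set φ : ℂ → ℂ := fun z =>
      Complex.exp (Complex.I * f z + (ε:ℂ) * Complex.log (z / (z + Complex.I))) with hφdef
    set F : ℂ → ℂ := fun z => if z = (0:ℂ) then (0:ℂ) else φ z with hFdef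
    set Cl : Set ℂ := {z : ℂ | 0 ≤ z.im} ∩ Metric.closedBall (0:ℂ) R with hCldef
    have hφnorm : ∀ z : ℂ,
        ‖φ z‖ = Real.exp (-(f z).im + ε * Real.log ‖z / (z + Complex.I)‖) := by
      intro z
      rw [hφdef]
      rw [Complex.norm_exp]
      congr 1
      simp only [Complex.add_re, Complex.mul_re, Complex.I_re, Complex.I_im,
        Complex.ofReal_re, Complex.ofReal_im, Complex.log_re]
      ring
    have hDopen : IsOpen D :=
      (isOpen_lt continuous_const Complex.continuous_im).inter Metric.isOpen_ball
    have hClclosed : IsClosed Cl :=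
      (isClosed_le continuous_const Complex.continuous_im).inter Metric.isClosed_closedBall
    have hsub_closure : closure D ⊆ Cl := by
      apply closure_minimal
      · exact Set.inter_subset_inter (fun z (hz : 0 < z.im) => le_of_lt hz) Metric.ball_subset_closedBall
      · exact hClclosed
    have hbdd : Bornology.IsBounded D :=
      Metric.isBounded_ball.subset Set.inter_subset_right
    -- differentiability
    have hdφ : DifferentiableOn ℂ φ D := by
      intro z hz
      have hzim : 0 < z.im := hz.1
      have hz0 : z ≠ 0 := fun h => by rw [h] at hzim; simp at hzim
      have h1 : DifferentiableWithinAt ℂ f D z := (hd.mono Set.inter_subset_left) z hz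
      have h2 : DifferentiableWithinAt ℂ (fun w => w / (w + Complex.I)) D z :=
        (differentiableWithinAt_id.div
          (differentiableWithinAt_id.add_const _) (aux_addI_ne z hzim.le))
      have h3 := h2.clog (aux_slit z hzim.le hz0)
      exact ((h1.const_mul Complex.I).add (h3.const_mul (ε:ℂ))).cexp
    have hdF : DifferentiableOn ℂ F D := by
      apply hdφ.congr
      intro z hz
      have hzim : 0 < z.im := hz.1
      exact if_neg (fun h => by rw [h] at hzim; simp at hzim)
    -- continuity of φ away from 0
    have hφc : ContinuousOn φ {z : ℂ | 0 ≤ z.im ∧ z ≠ 0} := by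
      intro z hz
      have h1 : ContinuousWithinAt f {z : ℂ | 0 ≤ z.im ∧ z ≠ 0} z := hc z hz
      have h2 : ContinuousWithinAt (fun w => w / (w + Complex.I))
          {z : ℂ | 0 ≤ z.im ∧ z ≠ 0} z :=
        (continuousWithinAt_id.div
          (continuousWithinAt_id.add continuousWithinAt_const) (aux_addI_ne z hz.1))
      have h3 : ContinuousWithinAt (fun w => Complex.log (w / (w + Complex.I)))
          {z : ℂ | 0 ≤ z.im ∧ z ≠ 0} z :=
        h2.clog (aux_slit z hz.1 hz.2)
      exact Complex.continuous_exp.continuousAt.comp_continuousWithinAt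
        ((h1.const_smul Complex.I).add (h3.const_smul (ε:ℂ)))
    -- continuity of F on Cl
    have hFc : ContinuousOn F Cl := by
      intro z hz
      by_cases hz0 : z = 0
      · subst hz0
        have hF0 : F 0 = 0 := if_pos rfl
        unfold ContinuousWithinAt
        rw [hF0]
        apply squeeze_zero_norm'
          (a := fun w : ℂ => Real.exp M * (2 * ‖w‖) ^ ε)
        · have hball : {w : ℂ | ‖w‖ < 1/2} ∈ 𝓝 (0:ℂ) := by
            have := Metric.ball_mem_nhds (0:ℂ) (by norm_num : (0:ℝ) < 1/2)
            simpa [Metric.ball, dist_zero_right] using this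
          filter_upwards [mem_nhdsWithin_of_mem_nhds hball, self_mem_nhdsWithin]
            with w hw hwCl
          by_cases hw0 : w = 0
          · rw [hw0]
            have hF0 : F 0 = 0 := if_pos rfl
            rw [hF0]
            simp only [norm_zero]
            positivity
          · have him : 0 ≤ w.im := hwCl.1
            have hwI : w + Complex.I ≠ 0 := aux_addI_ne w him
            have ht_pos : 0 < ‖w / (w + Complex.I)‖ :=
              norm_pos_iff.2 (div_ne_zero hw0 hwI)
            have hwIge : (1:ℝ)/2 ≤ ‖w + Complex.I‖ := by
              have h1 : ‖Complex.I‖ - ‖w + Complex.I‖ ≤ ‖Complex.I - (w + Complex.I)‖ :=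
                norm_sub_norm_le _ _
              have h2 : Complex.I - (w + Complex.I) = -w := by ring
              rw [h2, norm_neg, Complex.norm_I] at h1
              linarith [hw.le]
            have htle : ‖w / (w + Complex.I)‖ ≤ 2 * ‖w‖ := by
              rw [norm_div, div_le_iff₀ (by linarith)]
              nlinarith [norm_nonneg w]
            have hFw : F w = φ w := if_neg hw0
            rw [hFw, hφnorm]
            have hb1 : -(f w).im ≤ M := by
              have h5 := hM w him hw0
              have h6 := neg_abs_le (f w).im
              have h7 := Complex.abs_im_le_norm (f w)
              linarith [neg_le_neg (neg_abs_le (f w).im)]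
            have hb2 : ε * Real.log ‖w / (w + Complex.I)‖ ≤ ε * Real.log (2 * ‖w‖) :=
              mul_le_mul_of_nonneg_left (Real.log_le_log ht_pos htle) hε.le
            calc Real.exp (-(f w).im + ε * Real.log ‖w / (w + Complex.I)‖)
                ≤ Real.exp (M + ε * Real.log (2 * ‖w‖)) := by
                  rw [Real.exp_le_exp]; linarith
              _ = Real.exp M * (2 * ‖w‖) ^ ε := by
                  rw [Real.exp_add, Real.rpow_def_of_pos (by have := norm_pos_iff.2 hw0; linarith : (0:ℝ) < 2 * ‖w‖)]
                  ring_nf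
        · have h1 : Tendsto (fun w : ℂ => 2 * ‖w‖) (𝓝[Cl] 0) (𝓝 0) := by
            have := ((continuous_norm.tendsto (0:ℂ)).const_mul 2)
            simp only [norm_zero, mul_zero] at this
            exact this.mono_left nhdsWithin_le_nhds
          have h2 : Tendsto (fun s : ℝ => s ^ ε) (𝓝 0) (𝓝 0) := by
            have h3 := (Real.continuousAt_rpow_const 0 ε (Or.inr hε.le)).tendsto
            rwa [Real.zero_rpow (ne_of_gt hε)] at h3
          have := (h2.comp h1).const_mul (Real.exp M)
          simpa using this
      · have hsets : (Cl : Set ℂ) =ᶠ[𝓝 z] (Cl \ {0} : Set ℂ) := by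
          filter_upwards [compl_singleton_mem_nhds hz0] with w hw
          have hw0 : w ≠ 0 := hw
          simp only [Set.mem_diff, Set.mem_singleton_iff, eq_iff_iff]
          exact ⟨fun h => ⟨h, hw0⟩, fun h => h.1⟩
        rw [continuousWithinAt_congr_set hsets]
        have hsubS : (Cl \ {0} : Set ℂ) ⊆ {z : ℂ | 0 ≤ z.im ∧ z ≠ 0} :=
          fun w hw => ⟨hw.1.1, by simpa using hw.2⟩
        exact ((hφc z ⟨hz.1, hz0⟩).mono hsubS).congr
          (fun w hw => if_neg (by simpa using hw.2)) (if_neg hz0)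
    have hdcF : DiffContOnCl ℂ F D := ⟨hdF, hFc.mono hsub_closure⟩
    have hKR : 0 ≤ K / R := div_nonneg hK hRpos.le
    -- frontier bound
    have hfront : ∀ z ∈ frontier D, ‖F z‖ ≤ Real.exp (K / R) := by
      intro z hzf
      have hzCl : z ∈ Cl := hsub_closure (frontier_subset_closure hzf)
      have hznotD : z ∉ D := by
        rw [hDopen.frontier_eq] at hzf
        exact hzf.2
      by_cases hz0 : z = 0
      · rw [hz0]
        have hF0 : F 0 = 0 := if_pos rfl
        rw [hF0, norm_zero]
        positivity
      · have him : 0 ≤ z.im := hzCl.1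
        have hnormle : ‖z‖ ≤ R := by
          have := hzCl.2
          rwa [Metric.mem_closedBall, dist_zero_right] at this
        have htle1 : ‖z / (z + Complex.I)‖ ≤ 1 := by
          rw [norm_div]
          exact div_le_one_of_le₀ (aux_norm_le z him) (norm_nonneg _)
        have hlogle : ε * Real.log ‖z / (z + Complex.I)‖ ≤ 0 :=
          mul_nonpos_of_nonneg_of_nonpos hε.le (Real.log_nonpos (norm_nonneg _) htle1)
        rw [show F z = φ z from if_neg hz0, hφnorm, Real.exp_le_exp]
        rcases eq_or_lt_of_le him with heq | hlt
        · have hzre : ((z.re : ℝ) : ℂ) = z := Complex.ext rfl (by simp [← heq])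
          have hre0 : z.re ≠ 0 := by
            intro h
            apply hz0
            rw [← hzre, h]
            simp
          have himf : (f z).im = 0 := by rw [← hzre]; exact hreal z.re hre0
          rw [himf]
          linarith
        · have hzR : ‖z‖ = R := by
            by_contra h
            exact hznotD ⟨hlt, by
              rw [Metric.mem_ball, dist_zero_right]
              exact lt_of_le_of_ne hnormle h⟩
          have h1 : ‖f z‖ ≤ K / ‖z‖ :=
            hdecay z him hz0 (by rw [hzR]; exact le_trans (le_max_left r _) hR)
          have h2 : -(f z).im ≤ ‖f z‖ := by
            have h7 := Complex.abs_im_le_norm (f z)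
            linarith [neg_abs_le (f z).im]
          rw [hzR] at h1
          linarith
    -- apply maximum modulus
    have hz₀D : z₀ ∈ D := by
      constructor
      · exact hz₀
      · rw [Metric.mem_ball, dist_zero_right]
        have : ‖z₀‖ + 1 ≤ R :=
          le_trans (le_trans (le_max_right 1 _) (le_max_right r _)) hR
        linarith
    have hmax := Complex.norm_le_of_forall_mem_frontier_norm_le hbdd hdcF hfront
      (subset_closure hz₀D)
    rw [show F z₀ = φ z₀ from if_neg hz₀0, hφnorm] at hmax
    exact hmax
  -- extract the inequality
  have claim2 : ∀ R : ℝ, R₀ ≤ R → -(f z₀).im ≤ K / R := by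
    intro R hR
    have hlog0 : Real.log t₀ ≤ 0 := Real.log_nonpos ht₀pos.le ht₀le
    refine le_of_forall_pos_le_add fun η hη => ?_
    have h2 := (Real.exp_le_exp.1 (claim1 (η / (-Real.log t₀ + 1)) (div_pos hη (by linarith)) R hR))
    have h3 : (η / (-Real.log t₀ + 1)) * (-Real.log t₀) ≤ η := by
      rw [div_mul_eq_mul_div, div_le_iff₀ (by linarith)]
      nlinarith
    nlinarith
  have final : -(f z₀).im ≤ 0 := by
    refine le_of_forall_pos_le_add fun η hη => ?_
    set R : ℝ := max R₀ (K / η + 1) with hRdef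
    have hRge : R₀ ≤ R := le_max_left _ _
    have hRpos : 0 < R := lt_of_lt_of_le (by linarith) hRge
    have h1 : K / R ≤ η := by
      rw [div_le_iff₀ hRpos]
      have h2 : K / η + 1 ≤ R := le_max_right _ _
      have h3 : K / η * η = K := div_mul_cancel₀ K (ne_of_gt hη)
      nlinarith
    have := claim2 R hRge
    linarith
  linarith

lemma aux_vanish (f : ℂ → ℂ)
    (hd : DifferentiableOn ℂ f {z : ℂ | 0 < z.im})
    (hc : ContinuousOn f {z : ℂ | 0 ≤ z.im ∧ z ≠ 0})
    (M : ℝ) (hM : ∀ z : ℂ, 0 ≤ z.im → z ≠ 0 → ‖f z‖ ≤ M)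
    (hreal : ∀ t : ℝ, t ≠ 0 → (f (t : ℂ)).im = 0)
    (K r : ℝ) (hK : 0 ≤ K)
    (hdecay : ∀ z : ℂ, 0 ≤ z.im → z ≠ 0 → r ≤ ‖z‖ → ‖f z‖ ≤ K / ‖z‖) :
    ∀ z : ℂ, 0 ≤ z.im → z ≠ 0 → f z = 0 := by
  have him1 := aux_im_nonneg f hd hc M hM hreal K r hK hdecay
  have him2 := aux_im_nonneg (fun z => -f z) hd.neg hc.neg M
    (by intro z h1 h2; simpa using hM z h1 h2)
    (by intro t ht; simp [hreal t ht]) K r hK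
    (by intro z h1 h2 h3; simpa using hdecay z h1 h2 h3)
  have himzero : ∀ z : ℂ, 0 < z.im → (f z).im = 0 := by
    intro z hz
    have h2 := him2 z hz
    simp only [Complex.neg_im] at h2
    linarith [him1 z hz]
  have hA : IsOpen {z : ℂ | 0 < z.im} := isOpen_lt continuous_const Complex.continuous_im
  have han : AnalyticOnNhd ℂ f {z : ℂ | 0 < z.im} := hd.analyticOnNhd hA
  have hpre : IsPreconnected {z : ℂ | 0 < z.im} := (convex_halfSpace_im_gt 0).isPreconnected
  have hUHP : ∀ z : ℂ, 0 < z.im → f z = 0 := by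
    rcases han.is_constant_or_isOpen hpre with ⟨w, hw⟩ | hopen
    · -- constant case : w = 0 by decay
      have hbound : ∀ R : ℝ, max r 1 ≤ R → ‖w‖ ≤ K / R := by
        intro R hR
        have hR1 : (1:ℝ) ≤ R := le_trans (le_max_right r 1) hR
        have himR : (((R : ℝ) : ℂ) * Complex.I).im = R := by simp
        have hmem : (0:ℝ) < (((R : ℝ) : ℂ) * Complex.I).im := by rw [himR]; linarith
        have hne : ((R : ℝ) : ℂ) * Complex.I ≠ 0 := by
          intro h
          rw [h] at hmem
          simp at hmem
        have hnorm : ‖((R : ℝ) : ℂ) * Complex.I‖ = R := by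
          rw [norm_mul, Complex.norm_I, mul_one, Complex.norm_real, Real.norm_eq_abs,
            _root_.abs_of_nonneg (by linarith : (0:ℝ) ≤ R)]
        have hdec := hdecay (((R : ℝ) : ℂ) * Complex.I) (le_of_lt hmem) hne
          (by rw [hnorm]; exact le_trans (le_max_left r 1) hR)
        rw [hnorm] at hdec
        rw [← hw _ hmem]
        exact hdec
      have hw0 : w = 0 := by
        rw [← norm_le_zero_iff]
        refine le_of_forall_pos_le_add fun η hη => ?_
        set R : ℝ := max (max r 1) (K / η + 1) with hRdef
        have hRge : max r 1 ≤ R := le_max_left _ _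
        have hRpos : (0:ℝ) < R :=
          lt_of_lt_of_le one_pos (le_trans (le_max_right r 1) hRge)
        have h1 : K / R ≤ η := by
          rw [div_le_iff₀ hRpos]
          have h2 : K / η + 1 ≤ R := le_max_right _ _
          have h3 : K / η * η = K := div_mul_cancel₀ K (ne_of_gt hη)
          nlinarith
        linarith [hbound R hRge]
      intro z hz
      rw [hw z hz, hw0]
    · -- open image case : impossible since image lies in ℝ
      exfalso
      have h1 : IsOpen (f '' {z : ℂ | 0 < z.im}) := hopen _ subset_rfl hA
      have hImem : f Complex.I ∈ f '' {z : ℂ | 0 < z.im} :=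
        ⟨Complex.I, by simp, rfl⟩
      obtain ⟨η, hη, hball⟩ := Metric.isOpen_iff.1 h1 _ hImem
      have hpt : f Complex.I + ((η/2 : ℝ) : ℂ) * Complex.I ∈ Metric.ball (f Complex.I) η := by
        rw [Metric.mem_ball, dist_eq_norm]
        have : f Complex.I + ((η/2 : ℝ) : ℂ) * Complex.I - f Complex.I
            = ((η/2 : ℝ) : ℂ) * Complex.I := by ring
        rw [this, norm_mul, Complex.norm_I, mul_one, Complex.norm_real, Real.norm_eq_abs,
          _root_.abs_of_nonneg (by linarith : (0:ℝ) ≤ η/2)]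
        linarith
      obtain ⟨z, hz, hfz⟩ := hball hpt
      have him1' : (f z).im = 0 := himzero z hz
      have him2' : (f Complex.I + ((η/2 : ℝ) : ℂ) * Complex.I).im = η / 2 := by
        simp [Complex.add_im, himzero Complex.I (by simp)]
      rw [← hfz, him1'] at him2'
      linarith
  -- boundary values by continuity
  intro z hz0 hzne
  rcases lt_or_eq_of_le hz0 with hlt | heq
  · exact hUHP z hlt
  · have hsubS : {w : ℂ | 0 < w.im} ⊆ {w : ℂ | 0 ≤ w.im ∧ w ≠ 0} := by
      intro w hw
      refine ⟨le_of_lt hw, ?_⟩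
      intro h
      rw [h] at hw
      simp at hw
    have hzmem : z ∈ closure {w : ℂ | 0 < w.im} := by
      rw [Complex.closure_setOf_lt_im]
      exact hz0
    haveI hne : (𝓝[{w : ℂ | 0 < w.im}] z).NeBot :=
      mem_closure_iff_nhdsWithin_neBot.1 hzmem
    have h1 : Tendsto f (𝓝[{w : ℂ | 0 < w.im}] z) (𝓝 (f z)) :=
      ((hc z ⟨hz0, hzne⟩).mono_left (nhdsWithin_mono z hsubS))
    have h2 : Tendsto f (𝓝[{w : ℂ | 0 < w.im}] z) (𝓝 0) := by
      apply Tendsto.congr' _ tendsto_const_nhds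
      filter_upwards [self_mem_nhdsWithin] with w hw
      exact (hUHP w hw).symm
    exact tendsto_nhds_unique h1 h2

set_option maxHeartbeats 1000000 in
/-- Liouville-type rigidity: a matrix function `U`, analytic in the
open upper half-plane and continuous up to the boundary away from the origin, with
everywhere nonvanishing determinant, unitary on the real line, with
`‖U(ρ) - I‖ = O(|ρ|⁻¹)` and `‖U(ρ)⁻¹ - I‖ = O(|ρ|⁻¹)` at infinity, and with `U`, `U⁻¹`
bounded near the origin, must be identically the identity matrix. -/
theorem unitary_boundary_liouville_rigidity
    (m : ℕ) (U : ℂ → Matrix (Fin m) (Fin m) ℂ)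
    (hanal : DifferentiableOn ℂ U {ρ : ℂ | 0 < ρ.im})
    (hcont : ContinuousOn U {ρ : ℂ | 0 ≤ ρ.im ∧ ρ ≠ 0})
    -- (i) det U(ρ) ≠ 0 on the closed upper half-plane minus the origin
    (hdet : ∀ ρ : ℂ, 0 ≤ ρ.im → ρ ≠ 0 → IsUnit (U ρ))
    -- (ii) U is unitary on the real line
    (huni : ∀ ρ : ℝ, ρ ≠ 0 → (U (ρ : ℂ))ᴴ * U (ρ : ℂ) = 1)
    -- (iii) ‖U(ρ) - I‖ = O(|ρ|⁻¹) and ‖U(ρ)⁻¹ - I‖ = O(|ρ|⁻¹) as |ρ| → ∞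
    (hinfty : ∃ c r : ℝ, ∀ ρ : ℂ, 0 ≤ ρ.im → r ≤ ‖ρ‖ →
      ‖U ρ - 1‖ ≤ c / ‖ρ‖ ∧ ‖(U ρ)⁻¹ - 1‖ ≤ c / ‖ρ‖)
    -- (iv) U and U⁻¹ are bounded near ρ = 0
    (hzero : ∃ c δ : ℝ, 0 < δ ∧ ∀ ρ : ℂ, 0 ≤ ρ.im → ρ ≠ 0 → ‖ρ‖ ≤ δ →
      ‖U ρ‖ ≤ c ∧ ‖(U ρ)⁻¹‖ ≤ c) :
    ∀ ρ : ℂ, 0 ≤ ρ.im → ρ ≠ 0 → U ρ = 1 := by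
  classical
  haveI : CompleteSpace (Matrix (Fin m) (Fin m) ℂ) := FiniteDimensional.complete ℂ _
  obtain ⟨c, r, hinf⟩ := hinfty
  obtain ⟨c₀, δ, hδ, hz0⟩ := hzero
  set V : ℂ → Matrix (Fin m) (Fin m) ℂ := fun z => Ring.inverse (U z) with hVdef
  have hVeq : ∀ z : ℂ, V z = (U z)⁻¹ := fun z => (Matrix.nonsing_inv_eq_ringInverse _).symm
  have hdV : DifferentiableOn ℂ V {z : ℂ | 0 < z.im} := by
    apply DifferentiableOn.inverse hanal
    intro z hz
    exact hdet z (le_of_lt hz) (fun h => by rw [h] at hz; simp at hz)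
  have hcV : ContinuousOn V {z : ℂ | 0 ≤ z.im ∧ z ≠ 0} := by
    intro z hz
    have h1 := NormedRing.inverse_continuousAt (hdet z hz.1 hz.2).unit
    rw [IsUnit.unit_spec] at h1
    exact h1.comp_continuousWithinAt (hcont z hz)
  -- global bound
  have hglobal : ∃ M : ℝ, ∀ z : ℂ, 0 ≤ z.im → z ≠ 0 → ‖U z‖ ≤ M ∧ ‖V z‖ ≤ M := by
    set R₁ : ℝ := max r δ with hR₁def
    have hR₁pos : 0 < R₁ := lt_of_lt_of_le hδ (le_max_right r δ)
    set K₁ : Set ℂ := {z : ℂ | 0 ≤ z.im} ∩ ({z : ℂ | δ ≤ ‖z‖} ∩ {z : ℂ | ‖z‖ ≤ R₁})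
      with hK₁def
    have hK₁closed : IsClosed K₁ :=
      (isClosed_le continuous_const Complex.continuous_im).inter
        ((isClosed_le continuous_const continuous_norm).inter
          (isClosed_le continuous_norm continuous_const))
    have hK₁c : IsCompact K₁ := by
      apply IsCompact.of_isClosed_subset (isCompact_closedBall (0:ℂ) R₁) hK₁closed
      intro z hz
      rw [Metric.mem_closedBall, dist_zero_right]
      exact hz.2.2
    have hK₁S : K₁ ⊆ {z : ℂ | 0 ≤ z.im ∧ z ≠ 0} := by
      intro z hz
      refine ⟨hz.1, fun h => ?_⟩
      rw [h] at hz
      have := hz.2.1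
      simp at this
      linarith
    obtain ⟨C₁, hC₁⟩ := hK₁c.exists_bound_of_continuousOn (hcont.mono hK₁S)
    obtain ⟨C₂, hC₂⟩ := hK₁c.exists_bound_of_continuousOn (hcV.mono hK₁S)
    set Cbig : ℝ := |c| / R₁ + ‖(1 : Matrix (Fin m) (Fin m) ℂ)‖ with hCbigdef
    refine ⟨max (max c₀ C₁) (max C₂ Cbig), ?_⟩
    intro z hzim hzne
    rcases le_total ‖z‖ δ with hle | hge
    · have h := hz0 z hzim hzne hle
      rw [← hVeq] at h
      exact ⟨le_trans h.1 (le_trans (le_max_left c₀ C₁) (le_max_left _ _)),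
        le_trans h.2 (le_trans (le_max_left c₀ C₁) (le_max_left _ _))⟩
    · rcases le_total ‖z‖ R₁ with hle2 | hge2
      · have hmem : z ∈ K₁ := ⟨hzim, hge, hle2⟩
        exact ⟨le_trans (hC₁ z hmem) (le_trans (le_max_right c₀ C₁) (le_max_left _ _)),
          le_trans (hC₂ z hmem) (le_trans (le_max_left C₂ Cbig) (le_max_right _ _))⟩
      · have hrle : r ≤ ‖z‖ := le_trans (le_max_left r δ) hge2
        have h := hinf z hzim hrle
        have hzpos : 0 < ‖z‖ := lt_of_lt_of_le hR₁pos hge2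
        have hbnd : c / ‖z‖ ≤ |c| / R₁ := by
          apply div_le_div₀ (abs_nonneg c) (le_abs_self c) hR₁pos hge2
        have h1 : ‖U z‖ ≤ Cbig := by
          calc ‖U z‖ = ‖(U z - 1) + 1‖ := by rw [sub_add_cancel]
            _ ≤ ‖U z - 1‖ + ‖(1 : Matrix (Fin m) (Fin m) ℂ)‖ := norm_add_le _ _
            _ ≤ |c| / R₁ + ‖(1 : Matrix (Fin m) (Fin m) ℂ)‖ := by
                have := le_trans h.1 hbnd; linarith
        have h2 : ‖V z‖ ≤ Cbig := by
          rw [hVeq]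
          calc ‖(U z)⁻¹‖ = ‖((U z)⁻¹ - 1) + 1‖ := by rw [sub_add_cancel]
            _ ≤ ‖(U z)⁻¹ - 1‖ + ‖(1 : Matrix (Fin m) (Fin m) ℂ)‖ := norm_add_le _ _
            _ ≤ |c| / R₁ + ‖(1 : Matrix (Fin m) (Fin m) ℂ)‖ := by
                have := le_trans h.2 hbnd; linarith
        exact ⟨le_trans h1 (le_trans (le_max_right C₂ Cbig) (le_max_right _ _)),
          le_trans h2 (le_trans (le_max_right C₂ Cbig) (le_max_right _ _))⟩
  obtain ⟨M, hM⟩ := hglobal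
  -- key scalar vanishing
  have key : ∀ (x : EuclideanSpace ℂ (Fin m)) (z : ℂ), 0 ≤ z.im → z ≠ 0 →
      (inner ℂ x ((Matrix.toEuclideanCLM (𝕜 := ℂ) (n := Fin m) (U z - 1)) x) : ℂ) = 0 := by
    intro x
    set Ψlin : Matrix (Fin m) (Fin m) ℂ →ₗ[ℂ] ℂ :=
      { toFun := fun A => inner ℂ x ((Matrix.toEuclideanCLM (𝕜 := ℂ) (n := Fin m) A) x)
        map_add' := fun a b => by
          simp only [map_add, ContinuousLinearMap.add_apply, inner_add_right]
        map_smul' := fun cc a => by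
          simp only [_root_.map_smul, ContinuousLinearMap.smul_apply, inner_smul_right,
            RingHom.id_apply, smul_eq_mul] } with hΨdef
    have Ψbound : ∀ A : Matrix (Fin m) (Fin m) ℂ, ‖Ψlin A‖ ≤ ‖x‖^2 * ‖A‖ := by
      intro A
      have h1 : ‖(inner ℂ x ((Matrix.toEuclideanCLM (𝕜 := ℂ) (n := Fin m) A) x) : ℂ)‖
          ≤ ‖x‖ * ‖(Matrix.toEuclideanCLM (𝕜 := ℂ) (n := Fin m) A) x‖ :=
        norm_inner_le_norm _ _
      have h2 : ‖(Matrix.toEuclideanCLM (𝕜 := ℂ) (n := Fin m) A) x‖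
          ≤ ‖Matrix.toEuclideanCLM (𝕜 := ℂ) (n := Fin m) A‖ * ‖x‖ :=
        ContinuousLinearMap.le_opNorm _ x
      have h3 : ‖Matrix.toEuclideanCLM (𝕜 := ℂ) (n := Fin m) A‖ = ‖A‖ :=
        (Matrix.cstar_norm_def A).symm
      calc ‖Ψlin A‖ ≤ ‖x‖ * ‖(Matrix.toEuclideanCLM (𝕜 := ℂ) (n := Fin m) A) x‖ := h1
        _ ≤ ‖x‖ * (‖A‖ * ‖x‖) := by
            rw [← h3]
            exact mul_le_mul_of_nonneg_left h2 (norm_nonneg x)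
        _ = ‖x‖^2 * ‖A‖ := by ring
    set Ψ : Matrix (Fin m) (Fin m) ℂ →L[ℂ] ℂ :=
      LinearMap.mkContinuous Ψlin (‖x‖^2) Ψbound with hΨCdef
    set g : ℂ → ℂ := fun z => Ψ (U z - 1) with hgdef
    set g' : ℂ → ℂ := fun z => Ψ (V z - 1) with hg'def
    have hgd : DifferentiableOn ℂ g {z : ℂ | 0 < z.im} :=
      Ψ.differentiable.comp_differentiableOn (hanal.sub_const 1)
    have hg'd : DifferentiableOn ℂ g' {z : ℂ | 0 < z.im} :=
      Ψ.differentiable.comp_differentiableOn (hdV.sub_const 1)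
    have hgc : ContinuousOn g {z : ℂ | 0 ≤ z.im ∧ z ≠ 0} :=
      Ψ.continuous.comp_continuousOn (hcont.sub continuousOn_const)
    have hg'c : ContinuousOn g' {z : ℂ | 0 ≤ z.im ∧ z ≠ 0} :=
      Ψ.continuous.comp_continuousOn (hcV.sub continuousOn_const)
    -- conjugation identity
    have hΨconj : ∀ A : Matrix (Fin m) (Fin m) ℂ,
        Ψlin (Aᴴ) = (starRingEnd ℂ) (Ψlin A) := by
      intro A
      show (inner ℂ x ((Matrix.toEuclideanCLM (𝕜 := ℂ) (n := Fin m) (Aᴴ)) x) : ℂ) = _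
      rw [← Matrix.star_eq_conjTranspose, map_star, ContinuousLinearMap.star_eq_adjoint,
        ContinuousLinearMap.adjoint_inner_right]
      exact (inner_conj_symm _ _).symm
    have hconj : ∀ t : ℝ, t ≠ 0 → g' (t : ℂ) = (starRingEnd ℂ) (g (t : ℂ)) := by
      intro t ht
      have hAH : V (t:ℂ) = (U (t:ℂ))ᴴ := by
        rw [hVeq]
        exact Matrix.inv_eq_left_inv (huni t ht)
      have hstep : V (t:ℂ) - 1 = (U (t:ℂ) - 1)ᴴ := by
        rw [hAH, Matrix.conjTranspose_sub, Matrix.conjTranspose_one]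
      show Ψlin (V (t:ℂ) - 1) = (starRingEnd ℂ) (Ψlin (U (t:ℂ) - 1))
      rw [hstep]
      exact hΨconj _
    -- global bounds for g, g'
    set Mf : ℝ := ‖x‖^2 * (M + ‖(1 : Matrix (Fin m) (Fin m) ℂ)‖) with hMfdef
    have hgbound : ∀ z : ℂ, 0 ≤ z.im → z ≠ 0 → ‖g z‖ ≤ Mf ∧ ‖g' z‖ ≤ Mf := by
      intro z h1 h2
      obtain ⟨hU, hV⟩ := hM z h1 h2
      constructor
      · calc ‖g z‖ ≤ ‖x‖^2 * ‖U z - 1‖ := Ψbound _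
          _ ≤ Mf := by
            rw [hMfdef]
            have h3 : ‖U z - 1‖ ≤ ‖U z‖ + ‖(1 : Matrix (Fin m) (Fin m) ℂ)‖ := norm_sub_le _ _
            nlinarith [sq_nonneg ‖x‖, norm_nonneg x]
      · calc ‖g' z‖ ≤ ‖x‖^2 * ‖V z - 1‖ := Ψbound _
          _ ≤ Mf := by
            rw [hMfdef]
            have h3 : ‖V z - 1‖ ≤ ‖V z‖ + ‖(1 : Matrix (Fin m) (Fin m) ℂ)‖ := norm_sub_le _ _
            nlinarith [sq_nonneg ‖x‖, norm_nonneg x]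
    -- decay for g, g'
    have hgdecay : ∀ z : ℂ, 0 ≤ z.im → z ≠ 0 → r ≤ ‖z‖ →
        ‖g z‖ ≤ ‖x‖^2 * |c| / ‖z‖ ∧ ‖g' z‖ ≤ ‖x‖^2 * |c| / ‖z‖ := by
      intro z h1 h2 h3
      obtain ⟨hU, hV⟩ := hinf z h1 h3
      rw [← hVeq] at hV
      have hzpos : 0 < ‖z‖ := norm_pos_iff.2 h2
      have hcc : c / ‖z‖ ≤ |c| / ‖z‖ := by gcongr; exact le_abs_self c
      constructor
      · calc ‖g z‖ ≤ ‖x‖^2 * ‖U z - 1‖ := Ψbound _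
          _ ≤ ‖x‖^2 * (|c| / ‖z‖) := by
              have := le_trans hU hcc
              nlinarith [sq_nonneg ‖x‖]
          _ = ‖x‖^2 * |c| / ‖z‖ := by ring
      · calc ‖g' z‖ ≤ ‖x‖^2 * ‖V z - 1‖ := Ψbound _
          _ ≤ ‖x‖^2 * (|c| / ‖z‖) := by
              have := le_trans hV hcc
              nlinarith [sq_nonneg ‖x‖]
          _ = ‖x‖^2 * |c| / ‖z‖ := by ring
    -- the two scalar functions
    have hvan1 := aux_vanish (fun z => g z + g' z) (hgd.add hg'd) (hgc.add hg'c)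
      (2 * Mf)
      (by
        intro z h1 h2
        obtain ⟨ha, hb⟩ := hgbound z h1 h2
        calc ‖g z + g' z‖ ≤ ‖g z‖ + ‖g' z‖ := norm_add_le _ _
          _ ≤ 2 * Mf := by linarith)
      (by
        intro t ht
        show (g (t:ℂ) + g' (t:ℂ)).im = 0
        rw [hconj t ht]
        simp [Complex.add_im])
      (2 * (‖x‖^2 * |c|)) r (by positivity)
      (by
        intro z h1 h2 h3
        obtain ⟨ha, hb⟩ := hgdecay z h1 h2 h3
        have hzpos : 0 < ‖z‖ := norm_pos_iff.2 h2
        calc ‖g z + g' z‖ ≤ ‖g z‖ + ‖g' z‖ := norm_add_le _ _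
          _ ≤ 2 * (‖x‖^2 * |c|) / ‖z‖ := by
              rw [show (2:ℝ) * (‖x‖^2 * |c|) / ‖z‖
                  = ‖x‖^2 * |c| / ‖z‖ + ‖x‖^2 * |c| / ‖z‖ by ring]
              linarith)
    have hvan2 := aux_vanish (fun z => Complex.I * (g z - g' z))
      ((hgd.sub hg'd).const_mul Complex.I)
      (continuousOn_const.mul (hgc.sub hg'c))
      (2 * Mf)
      (by
        intro z h1 h2
        obtain ⟨ha, hb⟩ := hgbound z h1 h2
        rw [norm_mul, Complex.norm_I, one_mul]
        calc ‖g z - g' z‖ ≤ ‖g z‖ + ‖g' z‖ := norm_sub_le _ _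
          _ ≤ 2 * Mf := by linarith)
      (by
        intro t ht
        show (Complex.I * (g (t:ℂ) - g' (t:ℂ))).im = 0
        rw [hconj t ht]
        simp [Complex.mul_im, Complex.sub_re, Complex.sub_im, Complex.conj_re,
          Complex.conj_im])
      (2 * (‖x‖^2 * |c|)) r (by positivity)
      (by
        intro z h1 h2 h3
        obtain ⟨ha, hb⟩ := hgdecay z h1 h2 h3
        have hzpos : 0 < ‖z‖ := norm_pos_iff.2 h2
        rw [norm_mul, Complex.norm_I, one_mul]
        calc ‖g z - g' z‖ ≤ ‖g z‖ + ‖g' z‖ := norm_sub_le _ _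
          _ ≤ 2 * (‖x‖^2 * |c|) / ‖z‖ := by
              rw [show (2:ℝ) * (‖x‖^2 * |c|) / ‖z‖
                  = ‖x‖^2 * |c| / ‖z‖ + ‖x‖^2 * |c| / ‖z‖ by ring]
              linarith)
    intro z hz1 hz2
    have h1 : g z + g' z = 0 := hvan1 z hz1 hz2
    have h2 : Complex.I * (g z - g' z) = 0 := hvan2 z hz1 hz2
    have h3 : g z - g' z = 0 := by
      rcases mul_eq_zero.1 h2 with h | h
      · exact absurd h Complex.I_ne_zero
      · exact h
    have h4 : g z = 0 := by linear_combination (h1 + h3) / 2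
    exact h4
  -- conclusion by polarization
  intro ρ hρim hρne
  have hT : ∀ x : EuclideanSpace ℂ (Fin m),
      (inner ℂ ((Matrix.toEuclideanCLM (𝕜 := ℂ) (n := Fin m) (U ρ - 1)) x) x : ℂ) = 0 := by
    intro x
    have h1 := key x ρ hρim hρne
    rw [← inner_conj_symm]
    rw [h1]
    simp
  have h0 : ((Matrix.toEuclideanCLM (𝕜 := ℂ) (n := Fin m) (U ρ - 1)) :
      EuclideanSpace ℂ (Fin m) →ₗ[ℂ] EuclideanSpace ℂ (Fin m)) = 0 :=
    (inner_map_self_eq_zero _).1 (fun x => hT x)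
  have h2 : Matrix.toEuclideanCLM (𝕜 := ℂ) (n := Fin m) (U ρ - 1) = 0 := by
    apply ContinuousLinearMap.coe_injective
    rw [h0]
    rfl
  have h3 : U ρ - 1 = 0 := by
    have h4 := congrArg (Matrix.toEuclideanCLM (𝕜 := ℂ) (n := Fin m)).symm h2
    simpa using h4
  rw [sub_eq_zero] at h3
  exact h3
end
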